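/- The improper integral ∫₀^{π/2} √(1/(2 cos φ) - (1.32)²/4) dφ, taken over the set where the integrand is real, is greater than 1.32. -/
import Mathlib
set_option maxHeartbeats 1000000

open Real intervalIntegral MeasureTheory Set

noncomputable def fI : ℝ → ℝ := fun φ => Real.sqrt (1 / (2 * Real.cos φ) - 0.4356)

noncomputable def G : ℝ → ℝ := fun t => (Real.sqrt 2)⁻¹ *
    (t ^ (-(1/2):ℝ) - 0.4356 * t ^ ((1/2):ℝ) - 0.37945512 * t ^ ((3/2):ℝ))

lemma pi_half_gt : (1.57:ℝ) < π/2 := by nlinarith [Real.pi_gt_d6]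

lemma fI_nonneg (φ : ℝ) : 0 ≤ fI φ := Real.sqrt_nonneg _

lemma fI_integrable : IntervalIntegrable fI volume 0 (π/2) := by
  have hpi : (0:ℝ) < π/2 := by linarith [pi_half_gt]
  have hg0 : IntervalIntegrable (fun t : ℝ => t ^ (-(1/2) : ℝ)) volume 0 (π/2) :=
    intervalIntegrable_rpow' (by norm_num)
  have hg1 := (hg0.comp_sub_left (π/2)).symm
  rw [sub_self, sub_zero] at hg1
  have hg : IntervalIntegrable (fun x : ℝ => Real.sqrt π / 2 * (π/2 - x) ^ (-(1/2):ℝ))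
      volume 0 (π/2) := hg1.const_mul _
  refine hg.mono_fun' (Measurable.aestronglyMeasurable (by unfold fI; fun_prop)) ?_
  filter_upwards [MeasureTheory.ae_restrict_mem measurableSet_uIoc] with φ hφ
  rw [Set.uIoc_of_le hpi.le] at hφ
  obtain ⟨hφ0, hφ2⟩ := hφ
  have ht0 : 0 ≤ π/2 - φ := by linarith
  rw [Real.norm_eq_abs, abs_of_nonneg (fI_nonneg φ)]
  rcases eq_or_lt_of_le ht0 with h0 | h0
  · -- φ = π/2
    have hφeq : φ = π/2 := by linarith
    have hz : fI φ = 0 := by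
      rw [hφeq]; unfold fI
      rw [Real.cos_pi_div_two, Real.sqrt_eq_zero']
      norm_num
    rw [hz]
    have h1 : (0:ℝ) ≤ (π/2 - φ) ^ (-(1/2):ℝ) := Real.rpow_nonneg ht0 _
    positivity
  · -- φ < π/2
    obtain ⟨t, htdef⟩ : ∃ t : ℝ, t = π/2 - φ := ⟨_, rfl⟩
    rw [← htdef] at h0 ht0 ⊢
    have hφt : φ = π/2 - t := by rw [htdef]; ring
    have htpi : t ≤ π/2 := by rw [htdef]; linarith
    have hsin : 2 / π * t ≤ Real.sin t := Real.mul_le_sin ht0 htpi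
    have hsinpos : 0 < Real.sin t := lt_of_lt_of_le (by positivity) hsin
    have hcos : Real.cos φ = Real.sin t := by
      rw [hφt, Real.cos_pi_div_two_sub]
    have hcospos : 0 < Real.cos φ := by rw [hcos]; exact hsinpos
    have h1 : 1 / (2 * Real.cos φ) - 0.4356 ≤ π / (4 * t) := by
      have h2 : 4 * t / π ≤ 2 * Real.cos φ := by
        rw [hcos, div_le_iff₀ Real.pi_pos]
        rw [div_mul_eq_mul_div, div_le_iff₀ Real.pi_pos] at hsin
        linarith
      have h3 : 1 / (2 * Real.cos φ) ≤ 1 / (4 * t / π) :=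
        one_div_le_one_div_of_le (by positivity) h2
      have h4 : 1 / (4 * t / π) = π / (4 * t) := one_div_div _ _
      linarith
    have h5 : fI φ ≤ Real.sqrt (π / (4 * t)) := Real.sqrt_le_sqrt (by linarith)
    have h6 : Real.sqrt (π / (4 * t)) = Real.sqrt π / 2 * t ^ (-(1/2):ℝ) := by
      rw [Real.rpow_neg ht0, ← Real.sqrt_eq_rpow]
      rw [show π / (4*t) = (Real.sqrt π / 2 * (Real.sqrt t)⁻¹)^2 from ?_]
      · exact Real.sqrt_sq (by positivity)
      · have hsπ : Real.sqrt π ^ 2 = π := Real.sq_sqrt Real.pi_pos.le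
        have hst : Real.sqrt t ^ 2 = t := Real.sq_sqrt ht0
        rw [mul_pow, div_pow, inv_pow, hsπ, hst]
        ring
    calc fI φ ≤ Real.sqrt (π / (4 * t)) := h5
      _ = Real.sqrt π / 2 * t ^ (-(1/2):ℝ) := h6

lemma fI_int {a b : ℝ} (h0 : 0 ≤ a) (hab : a ≤ b) (hb : b ≤ π/2) :
    IntervalIntegrable fI volume a b := by
  have hpi : (0:ℝ) ≤ π/2 := by linarith [pi_half_gt]
  refine fI_integrable.mono_set ?_
  rw [Set.uIcc_of_le hab, Set.uIcc_of_le hpi]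
  exact Set.Icc_subset_Icc h0 hb

lemma cos_upper {a : ℝ} (h0 : 0 ≤ a) (h1 : a ≤ 1) :
    Real.cos a ≤ 1 - a^2/2 + a^4*(5/96) := by
  have h := Real.cos_bound (x := a) (by rwa [abs_of_nonneg h0])
  rw [abs_of_nonneg h0] at h
  have := (abs_le.mp h).2
  linarith

lemma piece_bound {a b m B : ℝ} (ha : 0 ≤ a) (hab : a ≤ b) (hb : b ≤ 1)
    (hm : 0 ≤ m) (hcB : Real.cos a ≤ B) (hB0 : 0 < B)
    (hq : m ^ 2 ≤ 1 / (2 * B) - 0.4356) :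
    (b - a) * m ≤ ∫ φ in a..b, fI φ := by
  have hbpi : b ≤ π/2 := by linarith [pi_half_gt]
  rw [show (b - a) * m = ∫ _ in a..b, m by rw [intervalIntegral.integral_const, smul_eq_mul]]
  apply intervalIntegral.integral_mono_on hab (intervalIntegrable_const)
    (fI_int ha hab hbpi)
  intro φ hφ
  have hφ1 : φ ≤ 1 := hφ.2.trans hb
  have hcospos : 0 < Real.cos φ := by
    apply Real.cos_pos_of_mem_Ioo
    constructor
    · have := Real.pi_pos; linarith [ha.trans hφ.1]
    · linarith [pi_half_gt]
  have hcos : Real.cos φ ≤ Real.cos a := by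
    apply Real.cos_le_cos_of_nonneg_of_le_pi ha ?_ hφ.1
    nlinarith [Real.pi_gt_d6]
  have hcosB : Real.cos φ ≤ B := hcos.trans hcB
  have h1 : 1 / (2 * B) ≤ 1 / (2 * Real.cos φ) :=
    one_div_le_one_div_of_le (by positivity) (by linarith)
  unfold fI
  rw [Real.le_sqrt hm (by nlinarith [sq_nonneg m, hq, h1])]
  linarith

lemma tail_bound : (0.9534:ℝ) ≤ ∫ φ in (1:ℝ)..(π/2), fI φ := by
  have hpi := Real.pi_gt_d6
  have hpi' := Real.pi_lt_d6
  obtain ⟨t₀, ht₀def⟩ : ∃ t₀ : ℝ, t₀ = π/2 - 1 := ⟨_, rfl⟩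
  have ht₀lo : (0.570796:ℝ) < t₀ := by rw [ht₀def]; linarith
  have ht₀hi : t₀ < 0.5707965 := by rw [ht₀def]; linarith
  have ht₀pos : 0 < t₀ := by linarith
  have h1pi : (1:ℝ) ≤ π/2 := by linarith [pi_half_gt]
  -- integrability of each rpow on 0..t₀
  have hr1 : IntervalIntegrable (fun t : ℝ => t ^ (-(1/2):ℝ)) volume 0 t₀ :=
    intervalIntegrable_rpow' (by norm_num)
  have hr2 : IntervalIntegrable (fun t : ℝ => t ^ ((1/2):ℝ)) volume 0 t₀ :=
    intervalIntegrable_rpow' (by norm_num)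
  have hr3 : IntervalIntegrable (fun t : ℝ => t ^ ((3/2):ℝ)) volume 0 t₀ :=
    intervalIntegrable_rpow' (by norm_num)
  have hGint0 : IntervalIntegrable G volume 0 t₀ := by
    unfold G
    exact (((hr1.sub (hr2.const_mul 0.4356)).sub (hr3.const_mul 0.37945512)).const_mul _)
  have hGcomp : IntervalIntegrable (fun φ => G (π/2 - φ)) volume 1 (π/2) := by
    have h := (hGint0.comp_sub_left (π/2)).symm
    rw [sub_zero, show π/2 - t₀ = 1 by rw [ht₀def]; ring] at h
    exact h
  -- pointwise bound
  have hpt : ∀ φ ∈ Set.Icc (1:ℝ) (π/2), G (π/2 - φ) ≤ fI φ := by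
    intro φ hφ
    obtain ⟨t, htdef⟩ : ∃ t : ℝ, t = π/2 - φ := ⟨_, rfl⟩
    rw [← htdef]
    have ht0 : 0 ≤ t := by rw [htdef]; linarith [hφ.2]
    rcases eq_or_lt_of_le ht0 with h0 | h0
    · unfold G
      rw [← h0]
      rw [Real.zero_rpow (by norm_num : (-(1/2):ℝ) ≠ 0),
        Real.zero_rpow (by norm_num : ((1:ℝ)/2) ≠ 0),
        Real.zero_rpow (by norm_num : ((3:ℝ)/2) ≠ 0)]
      simpa using fI_nonneg φ
    · have htle : t ≤ 0.5707965 := by rw [htdef]; have := hφ.1; linarith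
      obtain ⟨s, hsdef⟩ : ∃ s : ℝ, s = Real.sqrt t := ⟨_, rfl⟩
      have hspos : 0 < s := by rw [hsdef]; exact Real.sqrt_pos.mpr h0
      have hs2 : s ^ 2 = t := by rw [hsdef]; exact Real.sq_sqrt ht0
      have e1 : t ^ (-(1/2):ℝ) = s⁻¹ := by
        rw [Real.rpow_neg ht0, ← Real.sqrt_eq_rpow, hsdef]
      have e2 : t ^ ((1/2):ℝ) = s := by rw [← Real.sqrt_eq_rpow, hsdef]
      have e3 : t ^ ((3/2):ℝ) = t * s := by
        rw [show ((3:ℝ)/2) = 1 + 1/2 by norm_num, Real.rpow_add h0, Real.rpow_one,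
          ← Real.sqrt_eq_rpow, hsdef]
      have hφt : φ = π/2 - t := by rw [htdef]; ring
      have hcos : Real.cos φ = Real.sin t := by rw [hφt, Real.cos_pi_div_two_sub]
      have hsinpos : 0 < Real.sin t := by
        apply Real.sin_pos_of_pos_of_lt_pi h0
        linarith
      have hsinle : Real.sin t ≤ t := (Real.sin_lt h0).le
      have hsqrt2pos : (0:ℝ) < Real.sqrt 2 := Real.sqrt_pos.mpr (by norm_num)
      have hsqrt2sq : Real.sqrt 2 ^ 2 = 2 := Real.sq_sqrt (by norm_num)
      have hnum : s⁻¹ - 0.4356*s - 0.37945512*(t*s)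
          = (1 - 0.4356*t - 0.37945512*t^2) / s := by
        rw [eq_div_iff hspos.ne']
        have hsinv : s⁻¹ * s = 1 := inv_mul_cancel₀ hspos.ne'
        linear_combination hsinv + (-0.4356 - 0.37945512*t) * hs2
      have hG : G t = (1 - 0.4356*t - 0.37945512*t^2) / (s * Real.sqrt 2) := by
        unfold G
        rw [e1, e2, e3, show (0.37945512:ℝ) * (t * s) = 0.37945512*(t*s) from rfl, hnum]
        ring
      rcases le_or_gt (G t) 0 with hG0 | hG0
      · exact hG0.trans (fI_nonneg φ)
      · unfold fI
        rw [Real.le_sqrt' hG0]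
        have ht2 : t^2 ≤ 0.33 := by nlinarith
        have haux : (0:ℝ) ≤ 3 - 1.7424*t - 0.75891024*t^2 := by nlinarith
        have hkey : (1 - 0.4356*t - 0.37945512*t^2)^2 ≤ 1 - 0.8712*t := by
          nlinarith [mul_nonneg (sq_nonneg t) haux]
        have hGsq : G t ^ 2 = (1 - 0.4356*t - 0.37945512*t^2)^2 / (2*t) := by
          rw [hG, div_pow, mul_pow, hs2, hsqrt2sq]
          ring
        rw [hGsq]
        have hstep : (1 - 0.4356*t - 0.37945512*t^2)^2 / (2*t) ≤ 1/(2*t) - 0.4356 := by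
          rw [div_le_iff₀ (by positivity)]
          have he : (1/(2*t) - 0.4356) * (2*t) = 1 - 0.8712*t := by
            field_simp; ring
          rw [he]
          exact hkey
        have hmono : 1/(2*t) ≤ 1/(2*Real.sin t) :=
          one_div_le_one_div_of_le (by positivity) (by linarith)
        rw [hcos]
        linarith
  -- integral comparison
  have hcomp : (∫ φ in (1:ℝ)..(π/2), G (π/2 - φ)) ≤ ∫ φ in (1:ℝ)..(π/2), fI φ :=
    intervalIntegral.integral_mono_on h1pi hGcomp (fI_int (by norm_num) h1pi le_rfl) hpt
  -- compute the G integral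
  have hchg : (∫ φ in (1:ℝ)..(π/2), G (π/2 - φ)) = ∫ t in (0:ℝ)..t₀, G t := by
    rw [intervalIntegral.integral_comp_sub_left G (π/2)]
    rw [sub_self, show π/2 - 1 = t₀ from ht₀def.symm]
  obtain ⟨s₀, hs₀def⟩ : ∃ s₀ : ℝ, s₀ = Real.sqrt t₀ := ⟨_, rfl⟩
  have hs₀lo : (0.7555:ℝ) ≤ s₀ := by
    rw [hs₀def, Real.le_sqrt (by norm_num) ht₀pos.le]
    nlinarith
  have hs₀hi : s₀ ≤ 0.7556 := by
    rw [hs₀def, show (0.7556:ℝ) = Real.sqrt (0.7556^2) from (Real.sqrt_sq (by norm_num)).symm]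
    exact Real.sqrt_le_sqrt (by nlinarith)
  have I1 : (∫ t in (0:ℝ)..t₀, t ^ (-(1/2):ℝ)) = 2 * s₀ := by
    rw [integral_rpow (Or.inl (by norm_num))]
    rw [show (-(1/2:ℝ) + 1) = 1/2 by norm_num, Real.zero_rpow (by norm_num : ((1:ℝ)/2) ≠ 0),
      ← Real.sqrt_eq_rpow, ← hs₀def]
    ring
  have I2 : (∫ t in (0:ℝ)..t₀, t ^ ((1/2):ℝ)) = 2/3 * (t₀ * s₀) := by
    rw [integral_rpow (Or.inl (by norm_num))]
    rw [show ((1/2:ℝ) + 1) = 1 + 1/2 by norm_num,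
      Real.zero_rpow (by norm_num : (1 + (1:ℝ)/2) ≠ 0),
      Real.rpow_add ht₀pos, Real.rpow_one, ← Real.sqrt_eq_rpow, ← hs₀def]
    ring
  have I3 : (∫ t in (0:ℝ)..t₀, t ^ ((3/2):ℝ)) = 2/5 * (t₀^2 * s₀) := by
    rw [integral_rpow (Or.inl (by norm_num))]
    rw [show ((3/2:ℝ) + 1) = 2 + 1/2 by norm_num,
      Real.zero_rpow (by norm_num : (2 + (1:ℝ)/2) ≠ 0),
      Real.rpow_add ht₀pos, ← Real.sqrt_eq_rpow, ← hs₀def,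
      show ((2:ℝ):ℝ) = ((2:ℕ):ℝ) by norm_num, Real.rpow_natCast]
    ring
  have hGval : (∫ t in (0:ℝ)..t₀, G t) =
      (Real.sqrt 2)⁻¹ *
        (2*s₀ - 0.4356 * (2/3 * (t₀ * s₀)) - 0.37945512 * (2/5 * (t₀^2 * s₀))) := by
    unfold G
    rw [intervalIntegral.integral_const_mul]
    rw [intervalIntegral.integral_sub (hr1.sub (hr2.const_mul 0.4356)) (hr3.const_mul 0.37945512)]
    rw [intervalIntegral.integral_sub hr1 (hr2.const_mul 0.4356)]
    rw [intervalIntegral.integral_const_mul, intervalIntegral.integral_const_mul]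
    rw [I1, I2, I3]
  -- numeric bound
  have hsqrt2 : Real.sqrt 2 ≤ 1.4142136 := by
    rw [show (1.4142136:ℝ) = Real.sqrt (1.4142136^2) from (Real.sqrt_sq (by norm_num)).symm]
    exact Real.sqrt_le_sqrt (by norm_num)
  have hsqrt2pos : (0:ℝ) < Real.sqrt 2 := Real.sqrt_pos.mpr (by norm_num)
  have hnum : (0.9534:ℝ) ≤ (∫ t in (0:ℝ)..t₀, G t) := by
    rw [hGval]
    have hs₀pos : (0:ℝ) ≤ s₀ := by linarith
    have ha : t₀ * s₀ ≤ 0.5707965 * 0.7556 :=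
      mul_le_mul ht₀hi.le hs₀hi hs₀pos (by norm_num)
    have hb : t₀^2 ≤ 0.5707965^2 := by nlinarith
    have hc' : t₀^2 * s₀ ≤ 0.5707965^2 * 0.7556 :=
      mul_le_mul hb hs₀hi hs₀pos (by positivity)
    have hX : (1.3483113:ℝ) ≤
        2*s₀ - 0.4356 * (2/3 * (t₀ * s₀)) - 0.37945512 * (2/5 * (t₀^2 * s₀)) := by
      nlinarith [ha, hc', hs₀lo]
    have h2 : (0.9534:ℝ) * Real.sqrt 2 ≤ 1.3483113 := by nlinarith
    calc (0.9534:ℝ) = (Real.sqrt 2)⁻¹ * (0.9534 * Real.sqrt 2) := by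
            field_simp
      _ ≤ (Real.sqrt 2)⁻¹ * (2*s₀ - 0.4356 * (2/3 * (t₀ * s₀))
            - 0.37945512 * (2/5 * (t₀^2 * s₀))) := by
            apply mul_le_mul_of_nonneg_left _ (by positivity)
            linarith
  linarith [hcomp, hchg ▸ hnum]

theorem integral_gt :
    (∫ φ in (0 : ℝ)..(π / 2),
        Real.sqrt (1 / (2 * Real.cos φ) - 1.32 ^ 2 / 4)) > 1.32 := by
  have hrw : (∫ φ in (0 : ℝ)..(π / 2), Real.sqrt (1 / (2 * Real.cos φ) - 1.32 ^ 2 / 4))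
      = ∫ φ in (0 : ℝ)..(π / 2), fI φ := by
    unfold fI; norm_num
  rw [hrw]
  have hpi2 : (1:ℝ) ≤ π/2 := by linarith [pi_half_gt]
  have e1 : (∫ φ in (0:ℝ)..0.1, fI φ) + (∫ φ in (0.1:ℝ)..0.2, fI φ) = ∫ φ in (0:ℝ)..0.2, fI φ :=
    intervalIntegral.integral_add_adjacent_intervals
      (fI_int (by norm_num) (by norm_num) (by linarith [pi_half_gt]))
      (fI_int (by norm_num) (by norm_num) (by linarith [pi_half_gt]))
  have e2 : (∫ φ in (0:ℝ)..0.2, fI φ) + (∫ φ in (0.2:ℝ)..0.3, fI φ) = ∫ φ in (0:ℝ)..0.3, fI φ :=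
    intervalIntegral.integral_add_adjacent_intervals
      (fI_int (by norm_num) (by norm_num) (by linarith [pi_half_gt]))
      (fI_int (by norm_num) (by norm_num) (by linarith [pi_half_gt]))
  have e3 : (∫ φ in (0:ℝ)..0.3, fI φ) + (∫ φ in (0.3:ℝ)..0.4, fI φ) = ∫ φ in (0:ℝ)..0.4, fI φ :=
    intervalIntegral.integral_add_adjacent_intervals
      (fI_int (by norm_num) (by norm_num) (by linarith [pi_half_gt]))
      (fI_int (by norm_num) (by norm_num) (by linarith [pi_half_gt]))
  have e4 : (∫ φ in (0:ℝ)..0.4, fI φ) + (∫ φ in (0.4:ℝ)..0.5, fI φ) = ∫ φ in (0:ℝ)..0.5, fI φ :=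
    intervalIntegral.integral_add_adjacent_intervals
      (fI_int (by norm_num) (by norm_num) (by linarith [pi_half_gt]))
      (fI_int (by norm_num) (by norm_num) (by linarith [pi_half_gt]))
  have e5 : (∫ φ in (0:ℝ)..0.5, fI φ) + (∫ φ in (0.5:ℝ)..0.6, fI φ) = ∫ φ in (0:ℝ)..0.6, fI φ :=
    intervalIntegral.integral_add_adjacent_intervals
      (fI_int (by norm_num) (by norm_num) (by linarith [pi_half_gt]))
      (fI_int (by norm_num) (by norm_num) (by linarith [pi_half_gt]))
  have e6 : (∫ φ in (0:ℝ)..0.6, fI φ) + (∫ φ in (0.6:ℝ)..0.7, fI φ) = ∫ φ in (0:ℝ)..0.7, fI φ :=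
    intervalIntegral.integral_add_adjacent_intervals
      (fI_int (by norm_num) (by norm_num) (by linarith [pi_half_gt]))
      (fI_int (by norm_num) (by norm_num) (by linarith [pi_half_gt]))
  have e7 : (∫ φ in (0:ℝ)..0.7, fI φ) + (∫ φ in (0.7:ℝ)..0.8, fI φ) = ∫ φ in (0:ℝ)..0.8, fI φ :=
    intervalIntegral.integral_add_adjacent_intervals
      (fI_int (by norm_num) (by norm_num) (by linarith [pi_half_gt]))
      (fI_int (by norm_num) (by norm_num) (by linarith [pi_half_gt]))
  have e8 : (∫ φ in (0:ℝ)..0.8, fI φ) + (∫ φ in (0.8:ℝ)..0.9, fI φ) = ∫ φ in (0:ℝ)..0.9, fI φ :=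
    intervalIntegral.integral_add_adjacent_intervals
      (fI_int (by norm_num) (by norm_num) (by linarith [pi_half_gt]))
      (fI_int (by norm_num) (by norm_num) (by linarith [pi_half_gt]))
  have e9 : (∫ φ in (0:ℝ)..0.9, fI φ) + (∫ φ in (0.9:ℝ)..1, fI φ) = ∫ φ in (0:ℝ)..1, fI φ :=
    intervalIntegral.integral_add_adjacent_intervals
      (fI_int (by norm_num) (by norm_num) (by linarith [pi_half_gt]))
      (fI_int (by norm_num) (by norm_num) (by linarith [pi_half_gt]))
  have e10 : (∫ φ in (0:ℝ)..1, fI φ) + (∫ φ in (1:ℝ)..(π/2), fI φ) = ∫ φ in (0:ℝ)..(π/2), fI φ :=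
    intervalIntegral.integral_add_adjacent_intervals
      (fI_int (by norm_num) (by norm_num) hpi2)
      (fI_int (by norm_num) hpi2 le_rfl)
  have p0 : ((0.1:ℝ) - 0) * 0.2537 ≤ ∫ φ in (0:ℝ)..0.1, fI φ :=
    piece_bound (by norm_num) (by norm_num) (by norm_num) (by norm_num)
      (by rw [Real.cos_zero]) (by norm_num) (by norm_num)
  have p1 : ((0.2:ℝ) - 0.1) * 0.2586 ≤ ∫ φ in (0.1:ℝ)..0.2, fI φ :=
    piece_bound (by norm_num) (by norm_num) (by norm_num) (by norm_num)
      (cos_upper (by norm_num) (by norm_num)) (by norm_num) (by norm_num)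
  have p2 : ((0.3:ℝ) - 0.2) * 0.273 ≤ ∫ φ in (0.2:ℝ)..0.3, fI φ :=
    piece_bound (by norm_num) (by norm_num) (by norm_num) (by norm_num)
      (cos_upper (by norm_num) (by norm_num)) (by norm_num) (by norm_num)
  have p3 : ((0.4:ℝ) - 0.3) * 0.2961 ≤ ∫ φ in (0.3:ℝ)..0.4, fI φ :=
    piece_bound (by norm_num) (by norm_num) (by norm_num) (by norm_num)
      (cos_upper (by norm_num) (by norm_num)) (by norm_num) (by norm_num)
  have p4 : ((0.5:ℝ) - 0.4) * 0.3272 ≤ ∫ φ in (0.4:ℝ)..0.5, fI φ :=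
    piece_bound (by norm_num) (by norm_num) (by norm_num) (by norm_num)
      (cos_upper (by norm_num) (by norm_num)) (by norm_num) (by norm_num)
  have p5 : ((0.6:ℝ) - 0.5) * 0.3656 ≤ ∫ φ in (0.5:ℝ)..0.6, fI φ :=
    piece_bound (by norm_num) (by norm_num) (by norm_num) (by norm_num)
      (cos_upper (by norm_num) (by norm_num)) (by norm_num) (by norm_num)
  have p6 : ((0.7:ℝ) - 0.6) * 0.4113 ≤ ∫ φ in (0.6:ℝ)..0.7, fI φ :=
    piece_bound (by norm_num) (by norm_num) (by norm_num) (by norm_num)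
      (cos_upper (by norm_num) (by norm_num)) (by norm_num) (by norm_num)
  have p7 : ((0.8:ℝ) - 0.7) * 0.4646 ≤ ∫ φ in (0.7:ℝ)..0.8, fI φ :=
    piece_bound (by norm_num) (by norm_num) (by norm_num) (by norm_num)
      (cos_upper (by norm_num) (by norm_num)) (by norm_num) (by norm_num)
  have p8 : ((0.9:ℝ) - 0.8) * 0.5266 ≤ ∫ φ in (0.8:ℝ)..0.9, fI φ :=
    piece_bound (by norm_num) (by norm_num) (by norm_num) (by norm_num)
      (cos_upper (by norm_num) (by norm_num)) (by norm_num) (by norm_num)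
  have p9 : ((1:ℝ) - 0.9) * 0.5992 ≤ ∫ φ in (0.9:ℝ)..1, fI φ :=
    piece_bound (by norm_num) (by norm_num) (by norm_num) (by norm_num)
      (cos_upper (by norm_num) (by norm_num)) (by norm_num) (by norm_num)
  have pt := tail_bound
  linarith
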